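/- Let $r \geq 1$ and let $(z_{i,m})$ for $i \in \{0,\ldots,r+1\}$, $m \geq 0$ satisfy the discrete Hirota equations $z_{i,m+1} z_{i,m-1} = z_{i,m}^2 - z_{i-1,m} z_{i+1,m}$ for $1 \leq i \leq r$, $m \geq 1$, with $z_{0,m} = z_{r+1,m} = 1$, $z_{i,0} = 1$. Assume $z_{i,m} \neq 0$ for all $i, m$. Define $z_{1,0} = 1$ and $z_{1,k} = 0$ for $k < 0$. Then for all $i \in \{1,\ldots,r+1\}$ and $m \geq 1$, $z_{i,m}$ equals the determinant of the $i \times i$ matrix $M^i_m$ with entries $(M^i_m)_{kl} = z_{1,m-k+l}$. -/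

import Mathlib

open Matrix Equiv

namespace HirotaAux

/-- `inl ↦ 0`, `inr j ↦ j+1`. -/
def e0 (n : ℕ) : Fin 1 ⊕ Fin n ≃ Fin (n + 1) where
  toFun := Sum.elim (fun _ => 0) (fun j => j.succ)
  invFun := fun k => Fin.cases (Sum.inl 0) (fun j => Sum.inr j) k
  left_inv := by
    rintro (a | j)
    · simp [Subsingleton.elim a 0]
    · simp
  right_inv := by
    intro k
    induction k using Fin.cases <;> simp

/-- `inl ↦ last`, `inr j ↦ j`. -/
def e1 (n : ℕ) : Fin 1 ⊕ Fin n ≃ Fin (n + 1) where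
  toFun := Sum.elim (fun _ => Fin.last n) (fun j => j.castSucc)
  invFun := fun k => Fin.lastCases (Sum.inl 0) (fun j => Sum.inr j) k
  left_inv := by
    rintro (a | j)
    · simp [Subsingleton.elim a 0]
    · simp
  right_inv := by
    intro k
    induction k using Fin.lastCases <;> simp

/-- `inl 0 ↦ 0`, `inl 1 ↦ last`, `inr j ↦ j+1`. -/
def E (n : ℕ) : Fin 2 ⊕ Fin n ≃ Fin (n + 2) where
  toFun := Sum.elim (fun a => if a = 0 then 0 else Fin.last (n + 1))
    (fun j => j.succ.castSucc)
  invFun := fun k => Fin.cases (Sum.inl 0)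
    (fun j' : Fin (n + 1) => Fin.lastCases (Sum.inl 1) (fun j : Fin n => Sum.inr j) j') k
  left_inv := by
    rintro (a | j)
    · fin_cases a
      · simp
      · simp [← Fin.succ_last]
    · simp [← Fin.succ_castSucc]
  right_inv := by
    intro k
    induction k using Fin.cases with
    | zero => simp
    | succ j' =>
      induction j' using Fin.lastCases with
      | last => rw [Fin.succ_last]; simp [← Fin.succ_last]
      | cast j => rw [Fin.succ_castSucc]; simp [← Fin.succ_castSucc]

@[simp] lemma e0_inl (n : ℕ) (a : Fin 1) : ((e0 n (Sum.inl a) : Fin (n+1)) : ℤ) = 0 := rfl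
@[simp] lemma e0_inr (n : ℕ) (j : Fin n) : ((e0 n (Sum.inr j) : Fin (n+1)) : ℤ) = (j : ℤ) + 1 := by
  simp [e0]
@[simp] lemma e1_inl (n : ℕ) (a : Fin 1) : ((e1 n (Sum.inl a) : Fin (n+1)) : ℤ) = n := by
  simp [e1]
@[simp] lemma e1_inr (n : ℕ) (j : Fin n) : ((e1 n (Sum.inr j) : Fin (n+1)) : ℤ) = (j : ℤ) := by
  simp [e1]
@[simp] lemma E_inl_zero (n : ℕ) : ((E n (Sum.inl 0) : Fin (n+2)) : ℤ) = 0 := rfl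
@[simp] lemma E_inl_one (n : ℕ) : ((E n (Sum.inl 1) : Fin (n+2)) : ℤ) = (n : ℤ) + 1 := by
  simp [E]
@[simp] lemma E_inr (n : ℕ) (j : Fin n) : ((E n (Sum.inr j) : Fin (n+2)) : ℤ) = (j : ℤ) + 1 := by
  simp [E]

variable {n : ℕ}

lemma det_submatrix_mul (M N : Matrix (Fin (n+1)) (Fin (n+1)) ℂ)
    (a b : Fin 1 ⊕ Fin n ≃ Fin (n+1)) :
    (M.submatrix a b).det * (N.submatrix b a).det = M.det * N.det := by
  have h1 : M.submatrix a b = (M.submatrix a a).submatrix id (b.trans a.symm) := by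
    ext k l; simp [submatrix_apply]
  have h2 : N.submatrix b a = (N.submatrix b b).submatrix id (a.trans b.symm) := by
    ext k l; simp [submatrix_apply]
  rw [h1, h2, det_permute', det_permute', det_submatrix_equiv_self,
    det_submatrix_equiv_self]
  have hs : (Perm.sign (a.trans b.symm) : ℤ) = (Perm.sign (b.trans a.symm) : ℤ) := by
    have : (a.trans b.symm) = (b.trans a.symm)⁻¹ := by
      ext x; simp [Perm.inv_def]
    rw [this, Perm.sign_inv]
  rw [hs]
  rcases Int.units_eq_one_or (Perm.sign (b.trans a.symm)) with h | h <;> rw [h] <;>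
    push_cast <;> ring

lemma corner_entry (Q : Matrix (Fin 2) (Fin n) ℂ) (R : Matrix (Fin n) (Fin 2) ℂ)
    (S' : Matrix (Fin n) (Fin n) ℂ) (a b : Fin 2) :
    ((of fun (_ : Fin 1) j => Q a j) * S' * (of fun j (_ : Fin 1) => R j b)) 0 0
      = (Q * S' * R) a b := by
  simp [Matrix.mul_apply]

lemma det_corner (x : ℂ) (B : Fin n → ℂ) (C : Fin n → ℂ)
    (S : Matrix (Fin n) (Fin n) ℂ) [Invertible S] :
    (fromBlocks (of fun _ _ : Fin 1 => x) (of fun _ j => B j) (of fun j _ => C j) S).det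
      = S.det * (x - ((of fun (_ : Fin 1) j => B j) * ⅟S * (of fun j (_ : Fin 1) => C j)) 0 0) := by
  rw [det_fromBlocks₂₂]
  congr 1
  rw [det_fin_one]
  simp [Matrix.sub_apply]

/-- The Toeplitz-type matrix built from the extended first row. -/
def Dmat (w : ℤ → ℂ) (i : ℕ) (m : ℤ) : Matrix (Fin i) (Fin i) ℂ :=
  Matrix.of fun k l => w (m - (k : ℤ) + (l : ℤ))

/-- Its determinant. -/
def Dd (w : ℤ → ℂ) (i : ℕ) (m : ℤ) : ℂ := (Dmat w i m).det

/-- Desnanot–Jacobi / Dodgson condensation for the family `Dd`. -/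
lemma key (w : ℤ → ℂ) (n : ℕ) (m : ℤ) (hS : Dd w n m ≠ 0) :
    Dd w (n+2) m * Dd w n m =
      Dd w (n+1) m * Dd w (n+1) m - Dd w (n+1) (m+1) * Dd w (n+1) (m-1) := by
  set A := Dmat w (n+2) m with hAdef
  set S := Dmat w n m with hSdef
  haveI : Invertible S := S.invertibleOfIsUnitDet (isUnit_iff_ne_zero.2 hS)
  set P : Matrix (Fin 2) (Fin 2) ℂ :=
    of (fun a b => A (E n (Sum.inl a)) (E n (Sum.inl b))) with hP
  set Q : Matrix (Fin 2) (Fin n) ℂ :=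
    of (fun a j => A (E n (Sum.inl a)) (E n (Sum.inr j))) with hQ
  set R : Matrix (Fin n) (Fin 2) ℂ :=
    of (fun j b => A (E n (Sum.inr j)) (E n (Sum.inl b))) with hR
  have hA : A.submatrix (E n) (E n) = fromBlocks P Q R S := by
    ext k l
    rcases k with k | k <;> rcases l with l | l <;>
      simp only [submatrix_apply, fromBlocks_apply₁₁, fromBlocks_apply₁₂,
        fromBlocks_apply₂₁, fromBlocks_apply₂₂, hP, hQ, hR, hSdef, hAdef, of_apply, Dmat]
    congr 1
    rw [E_inr, E_inr]
    ring
  have h1 : A.det = (P - Q * ⅟S * R).det * S.det := by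
    rw [← det_submatrix_equiv_self (E n) A, hA, det_fromBlocks₂₂]
    ring
  set T := P - Q * ⅟S * R with hT
  have hcorner : ∀ a b : Fin 2,
      S.det * T a b = (fromBlocks (of fun _ _ : Fin 1 => P a b) (of fun _ j => Q a j)
        (of fun j _ => R j b) S).det := by
    intro a b
    rw [det_corner, corner_entry]
    simp [hT, Matrix.sub_apply]
  have h00 : S.det * T 0 0 = Dd w (n+1) m := by
    rw [hcorner]
    have he : (fromBlocks (of fun _ _ : Fin 1 => P 0 0) (of fun _ j => Q 0 j)
        (of fun j _ => R j 0) S) = (Dmat w (n+1) m).submatrix (e0 n) (e0 n) := by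
      ext k l
      rcases k with k | k <;> rcases l with l | l <;>
        simp only [submatrix_apply, fromBlocks_apply₁₁, fromBlocks_apply₁₂,
          fromBlocks_apply₂₁, fromBlocks_apply₂₂, hP, hQ, hR, hSdef, hAdef, of_apply,
          Dmat] <;>
        try (congr 1 <;> (try simp only [e0_inl, e0_inr, E_inl_zero, E_inl_one, E_inr]) <;> try ring)
    rw [he, det_submatrix_equiv_self]
    rfl
  have h11 : S.det * T 1 1 = Dd w (n+1) m := by
    rw [hcorner]
    have he : (fromBlocks (of fun _ _ : Fin 1 => P 1 1) (of fun _ j => Q 1 j)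
        (of fun j _ => R j 1) S) = (Dmat w (n+1) m).submatrix (e1 n) (e1 n) := by
      ext k l
      rcases k with k | k <;> rcases l with l | l <;>
        simp only [submatrix_apply, fromBlocks_apply₁₁, fromBlocks_apply₁₂,
          fromBlocks_apply₂₁, fromBlocks_apply₂₂, hP, hQ, hR, hSdef, hAdef, of_apply,
          Dmat] <;>
        try (congr 1 <;> (try simp only [e1_inl, e1_inr, E_inl_zero, E_inl_one, E_inr]) <;> try ring)
    rw [he, det_submatrix_equiv_self]
    rfl
  have h01 : S.det * T 0 1 = ((Dmat w (n+1) (m+1)).submatrix (e0 n) (e1 n)).det := by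
    rw [hcorner]
    congr 1
    ext k l
    rcases k with k | k <;> rcases l with l | l <;>
      simp only [submatrix_apply, fromBlocks_apply₁₁, fromBlocks_apply₁₂,
        fromBlocks_apply₂₁, fromBlocks_apply₂₂, hP, hQ, hR, hSdef, hAdef, of_apply,
        Dmat] <;>
      try (congr 1 <;> (try simp only [e0_inl, e0_inr, e1_inl, e1_inr, E_inl_zero, E_inl_one, E_inr]) <;> try ring)
  have h10 : S.det * T 1 0 = ((Dmat w (n+1) (m-1)).submatrix (e1 n) (e0 n)).det := by
    rw [hcorner]
    congr 1
    ext k l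
    rcases k with k | k <;> rcases l with l | l <;>
      simp only [submatrix_apply, fromBlocks_apply₁₁, fromBlocks_apply₁₂,
        fromBlocks_apply₂₁, fromBlocks_apply₂₂, hP, hQ, hR, hSdef, hAdef, of_apply,
        Dmat] <;>
      try (congr 1 <;> (try simp only [e0_inl, e0_inr, e1_inl, e1_inr, E_inl_zero, E_inl_one, E_inr]) <;> try ring)
  have hcross : (S.det * T 0 1) * (S.det * T 1 0)
      = Dd w (n+1) (m+1) * Dd w (n+1) (m-1) := by
    rw [h01, h10]
    exact det_submatrix_mul _ _ _ _
  calc Dd w (n+2) m * Dd w n m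
      = (S.det * T 0 0) * (S.det * T 1 1) - (S.det * T 0 1) * (S.det * T 1 0) := by
        show A.det * S.det = _
        rw [h1, det_fin_two]
        ring
    _ = Dd w (n+1) m * Dd w (n+1) m - Dd w (n+1) (m+1) * Dd w (n+1) (m-1) := by
        rw [h00, h11, hcross]

lemma Dd_zero (w : ℤ → ℂ) (h0 : w 0 = 1) (hneg : ∀ k : ℤ, k < 0 → w k = 0) (i : ℕ) :
    Dd w i 0 = 1 := by
  have ht : (Dmat w i 0).BlockTriangular id := by
    intro a b hab
    simp only [Dmat, of_apply]
    apply hneg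
    have hab' : (b : ℕ) < (a : ℕ) := hab
    omega
  rw [Dd, det_of_upperTriangular ht]
  apply Finset.prod_eq_one
  intro k _
  simp only [Dmat, of_apply]
  rw [show (0:ℤ) - (k:ℤ) + (k:ℤ) = 0 by ring, h0]

lemma Dd_one (w : ℤ → ℂ) (m : ℤ) : Dd w 1 m = w m := by
  rw [Dd, det_fin_one]
  simp [Dmat]

end HirotaAux

open HirotaAux

/-- For a nowhere-vanishing solution of the `(A_r, A_ℕ)` discrete Hirota equations,
every `z i m` is the determinant of the `i × i` matrix with entries `z₁,(m-k+l)`,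
where the first row is extended by `z₁,0 = 1` and `z₁,k = 0` for `k < 0`. -/
theorem hirota_A_determinant_formula (r : ℕ) (hr : 1 ≤ r) (z : ℕ → ℕ → ℂ)
    (hb0 : ∀ m, z 0 m = 1) (hbr : ∀ m, z (r + 1) m = 1)
    (hm0 : ∀ i, z i 0 = 1)
    (hhirota : ∀ i, 1 ≤ i → i ≤ r → ∀ m, 1 ≤ m →
      z i (m + 1) * z i (m - 1) = z i m ^ 2 - z (i - 1) m * z (i + 1) m)
    (hnz : ∀ i m, z i m ≠ 0) :
    let w : ℤ → ℂ := fun m => if m < 0 then 0 else z 1 m.toNat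
    ∀ i : ℕ, 1 ≤ i → i ≤ r + 1 → ∀ m : ℕ, 1 ≤ m →
      z i m = Matrix.det (Matrix.of fun k l : Fin i =>
        w ((m : ℤ) - (k : ℤ) + (l : ℤ))) := by
  intro w
  have hwdef : w = fun m => if m < 0 then 0 else z 1 m.toNat := rfl
  have hw_nat : ∀ m : ℕ, w (m : ℤ) = z 1 m := by
    intro m
    rw [hwdef]
    simp
  have hw_neg : ∀ k : ℤ, k < 0 → w k = 0 := by
    intro k hk
    rw [hwdef]
    simp [hk]
  have hw0 : w 0 = 1 := by
    have := hw_nat 0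
    simpa [hm0] using this
  have main : ∀ i, i ≤ r + 1 → ∀ m : ℕ, z i m = Dd w i (m : ℤ) := by
    intro i
    induction i using Nat.strong_induction_on with
    | _ i IH =>
      rcases i with _ | _ | n
      · intro _ m
        simp [Dd, Dmat, hb0, Matrix.det_isEmpty]
      · intro _ m
        rw [Dd_one, hw_nat]
      · intro hle m
        have IH1 : ∀ m' : ℕ, z (n+1) m' = Dd w (n+1) (m' : ℤ) := IH (n+1) (by omega) (by omega)
        have IH0 : ∀ m' : ℕ, z n m' = Dd w n (m' : ℤ) := IH n (by omega) (by omega)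
        rcases m with _ | m'
        · rw [hm0, Nat.cast_zero]
          exact (Dd_zero w hw0 hw_neg _).symm
        · set M := m' + 1 with hM
          have hSnz : Dd w n (M : ℤ) ≠ 0 := by
            rw [← IH0]
            exact hnz n M
          have hkey := key w n (M : ℤ) hSnz
          have hh := hhirota (n+1) (by omega) (by omega) M (by omega)
          have hh' : z (n+1) (M+1) * z (n+1) m' = z (n+1) M ^ 2 - z n M * z (n+2) M := by
            simpa [hM] using hh
          have c1 : ((M : ℤ) + 1) = ((M + 1 : ℕ) : ℤ) := by push_cast; ring
          have c2 : ((M : ℤ) - 1) = ((m' : ℕ) : ℤ) := by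
            rw [hM]; push_cast; ring
          rw [c1, c2, ← IH1, ← IH1, ← IH1, ← IH0] at hkey
          have hgoal : Dd w (n+2) (M : ℤ) * z n M = z (n+2) M * z n M := by
            linear_combination hkey - hh'
          have := mul_right_cancel₀ (hnz n M) hgoal
          exact this.symm
  intro i hi1 hir m hm
  exact main i hir m
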